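/- Fix a positive integer m, and let G ∈ ℚ⟦x⟧ be the formal power series whose coefficient of x^n is the number of (m−1)-tuples of nonnegative integers (n_1, …, n_{m−1}) with Σ_{k=1}^{m−1} n_k = n and Σ_{k=1}^{m−1} k·n_k ≡ 0 (mod m). Then m · G = Σ_{d | m} φ(d) · (1 − x) · ((1 − x^d)^{m/d})⁻¹, where the sum ranges over the positive divisors d of m and ((1 − x^d)^{m/d})⁻¹ denotes the multiplicative inverse of the power series (1 − x^d)^{m/d} in ℚ⟦x⟧ (which exists since its constant term is 1). -/

import Mathlib

/-- The number of `(m-1)`-tuples `(n_1, …, n_{m-1})` of nonnegative integers with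
`∑ n_k = n` and `∑ k * n_k ≡ 0 (mod m)`. -/
noncomputable def numTuples (m n : ℕ) : ℕ :=
  Nat.card {f : Fin (m - 1) → ℕ //
    (∑ k, f k) = n ∧ (∑ k : Fin (m - 1), ((k : ℕ) + 1) * f k) % m = 0}

open Finset PowerSeries

lemma geom_inv (z : ℂ) :
    ((1 : ℂ⟦X⟧) - PowerSeries.C (R := ℂ) z * PowerSeries.X) * PowerSeries.mk (fun n => z ^ n) = 1 := by
  ext n
  cases n with
  | zero => simp
  | succ n =>
    rw [sub_mul, one_mul, map_sub, mul_assoc, PowerSeries.coeff_C_mul,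
      PowerSeries.coeff_succ_X_mul]
    simp [pow_succ, mul_comm]

lemma prod_one_sub_root_mul_X {d : ℕ} (hd : 0 < d) {ζ : ℂ} (hζ : IsPrimitiveRoot ζ d) :
    ∏ k ∈ Finset.range d, (1 - Polynomial.C (ζ ^ k) * Polynomial.X) =
      1 - Polynomial.X ^ d := by
  have hXd : (Polynomial.X ^ d - Polynomial.C 1 : Polynomial ℂ)
      = ∏ i ∈ Finset.range d, (Polynomial.X - Polynomial.C (ζ ^ i * 1)) :=
    X_pow_sub_C_eq_prod hζ hd (one_pow d)
  simp only [mul_one] at hXd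
  have key : ∏ k ∈ Finset.range d, (1 - Polynomial.C (ζ ^ k) * Polynomial.X)
      = Polynomial.C (∏ k ∈ Finset.range d, (-ζ ^ k)) * (Polynomial.X ^ d - Polynomial.C 1) := by
    have hfac : ∀ k ∈ Finset.range d,
        (1 - Polynomial.C (ζ ^ k) * Polynomial.X)
          = (-Polynomial.C (ζ ^ k)) * (Polynomial.X - Polynomial.C (ζ ^ (d - k))) := by
      intro k hk
      rw [Finset.mem_range] at hk
      have h1 : ζ ^ k * ζ ^ (d - k) = 1 := by
        rw [← pow_add, Nat.add_sub_cancel' hk.le, hζ.pow_eq_one]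
      calc (1 : Polynomial ℂ) - Polynomial.C (ζ ^ k) * Polynomial.X
          = Polynomial.C (ζ ^ k * ζ ^ (d - k)) - Polynomial.C (ζ ^ k) * Polynomial.X := by
            rw [h1, Polynomial.C_1]
        _ = (-Polynomial.C (ζ ^ k)) * (Polynomial.X - Polynomial.C (ζ ^ (d - k))) := by
            rw [Polynomial.C_mul]; ring
    rw [Finset.prod_congr rfl hfac, Finset.prod_mul_distrib]
    have hre : ∏ k ∈ Finset.range d, (Polynomial.X - Polynomial.C (ζ ^ (d - k)))
        = ∏ k ∈ Finset.range d, (Polynomial.X - Polynomial.C (ζ ^ k)) := by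
      have h1 : ∀ k ∈ Finset.range d, (Polynomial.X - Polynomial.C (ζ ^ (d - k)))
          = Polynomial.X - Polynomial.C (ζ ^ ((d - 1 - k) + 1)) := by
        intro k hk
        rw [Finset.mem_range] at hk
        rw [show d - k = (d - 1 - k) + 1 by omega]
      rw [Finset.prod_congr rfl h1]
      rw [Finset.prod_range_reflect (fun j => Polynomial.X - Polynomial.C (ζ ^ (j + 1))) d]
      have h0 : (Polynomial.X - Polynomial.C (ζ ^ 0) : Polynomial ℂ) ≠ 0 := by
        exact Polynomial.X_sub_C_ne_zero (ζ ^ 0)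
      apply mul_left_cancel₀ h0
      calc (Polynomial.X - Polynomial.C (ζ ^ 0)) * ∏ j ∈ Finset.range d, (Polynomial.X - Polynomial.C (ζ ^ (j + 1)))
          = (∏ j ∈ Finset.range d, (Polynomial.X - Polynomial.C (ζ ^ (j + 1)))) *
              (Polynomial.X - Polynomial.C (ζ ^ 0)) := mul_comm _ _
        _ = ∏ j ∈ Finset.range (d + 1), (Polynomial.X - Polynomial.C (ζ ^ j)) :=
            (Finset.prod_range_succ' (fun j => Polynomial.X - Polynomial.C (ζ ^ j)) d).symm
        _ = (∏ j ∈ Finset.range d, (Polynomial.X - Polynomial.C (ζ ^ j))) *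
              (Polynomial.X - Polynomial.C (ζ ^ d)) :=
            Finset.prod_range_succ _ d
        _ = (Polynomial.X - Polynomial.C (ζ ^ 0)) *
              ∏ k ∈ Finset.range d, (Polynomial.X - Polynomial.C (ζ ^ k)) := by
            rw [hζ.pow_eq_one, pow_zero, mul_comm]
    rw [hre, ← hXd]
    congr 1
    simp only [← Polynomial.C_neg]
    exact (map_prod Polynomial.C (fun x => -ζ ^ x) (Finset.range d)).symm
  have hc : ∏ k ∈ Finset.range d, (-ζ ^ k) = -1 := by
    have := congrArg (Polynomial.eval 0) key
    simp only [Polynomial.eval_prod, Polynomial.eval_sub, Polynomial.eval_one,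
      Polynomial.eval_mul, Polynomial.eval_C, Polynomial.eval_X, Polynomial.eval_pow,
      mul_zero, sub_zero, Finset.prod_const_one, zero_pow hd.ne'] at this
    linear_combination this
  rw [key, hc]
  simp only [Polynomial.C_neg, Polynomial.C_1]
  ring

lemma prod_one_sub_root_mul_X_ps {d : ℕ} (hd : 0 < d) {ζ : ℂ} (hζ : IsPrimitiveRoot ζ d) :
    ∏ k ∈ Finset.range d, ((1 : ℂ⟦X⟧) - PowerSeries.C (R := ℂ) (ζ ^ k) * PowerSeries.X) =
      1 - PowerSeries.X ^ d := by
  have h := congrArg (Polynomial.coeToPowerSeries.ringHom (R := ℂ))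
    (prod_one_sub_root_mul_X hd hζ)
  rw [map_prod, map_sub, map_one, map_pow] at h
  simp only [map_sub, map_one, map_mul, Polynomial.coeToPowerSeries.ringHom_apply,
    Polynomial.coe_C, Polynomial.coe_X] at h
  exact h

lemma prod_one_sub_root_mul_X_pow {d m : ℕ} (hd : 0 < d) {ζ : ℂ}
    (hζ : IsPrimitiveRoot ζ d) (hdm : d ∣ m) :
    ∏ k ∈ Finset.range m, ((1 : ℂ⟦X⟧) - PowerSeries.C (R := ℂ) (ζ ^ k) * PowerSeries.X) =
      (1 - PowerSeries.X ^ d) ^ (m / d) := by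
  obtain ⟨e, rfl⟩ := hdm
  rw [Nat.mul_div_cancel_left e hd]
  induction e with
  | zero => simp
  | succ e ih =>
    rw [Nat.mul_succ, Finset.prod_range_add, ih, pow_succ]
    congr 1
    rw [← prod_one_sub_root_mul_X_ps hd hζ]
    apply Finset.prod_congr rfl
    intro k _
    congr 2
    rw [pow_add, pow_mul, hζ.pow_eq_one, one_pow, one_mul]


lemma const_ne {d r : ℕ} (hd : 0 < d) :
    PowerSeries.constantCoeff (R := ℂ) ((1 - PowerSeries.X ^ d) ^ r) ≠ 0 := by
  rw [map_pow, map_sub, map_one, map_pow, PowerSeries.constantCoeff_X, zero_pow hd.ne', sub_zero,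
    one_pow]
  exact one_ne_zero

lemma inv_eq_prod_mk {d m : ℕ} (hd : 0 < d) {ζ : ℂ} (hζ : IsPrimitiveRoot ζ d) (hdm : d ∣ m) :
    ((1 - PowerSeries.X ^ d : ℂ⟦X⟧) ^ (m / d))⁻¹ =
      ∏ k ∈ Finset.range m, PowerSeries.mk (fun n => ζ ^ (k * n)) := by
  rw [PowerSeries.inv_eq_iff_mul_eq_one (const_ne hd), ← prod_one_sub_root_mul_X_pow hd hζ hdm,
    ← Finset.prod_mul_distrib]
  rw [← Finset.prod_const_one (s := Finset.range m)]
  apply Finset.prod_congr rfl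
  intro k _
  rw [mul_comm]
  have := geom_inv (ζ ^ k)
  simpa [pow_mul] using this

lemma term_eq {d m : ℕ} (hm : 0 < m) (hd : 0 < d) {ζ : ℂ} (hζ : IsPrimitiveRoot ζ d)
    (hdm : d ∣ m) :
    (1 - PowerSeries.X) * ((1 - PowerSeries.X ^ d : ℂ⟦X⟧) ^ (m / d))⁻¹ =
      ∏ k : Fin (m - 1), PowerSeries.mk (fun n => ζ ^ (((k : ℕ) + 1) * n)) := by
  rw [inv_eq_prod_mk hd hζ hdm]
  obtain ⟨m', rfl⟩ : ∃ m', m = m' + 1 := ⟨m - 1, (Nat.succ_pred_eq_of_pos hm).symm⟩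
  rw [Finset.prod_range_succ' (fun k => PowerSeries.mk fun n => ζ ^ (k * n)) m']
  simp only [zero_mul, pow_zero, Nat.add_sub_cancel]
  have h1 : ((1 : ℂ⟦X⟧) - PowerSeries.X) * PowerSeries.mk (fun _ => (1 : ℂ)) = 1 := by
    have := geom_inv 1
    simpa using this
  rw [mul_comm ((1 : ℂ⟦X⟧) - PowerSeries.X), mul_assoc,
    mul_comm (PowerSeries.mk fun _ => (1 : ℂ)), h1, mul_one]
  exact Finset.prod_range (fun k => PowerSeries.mk fun n => ζ ^ ((k + 1) * n))

lemma pow_primitive {m : ℕ} (hm : 0 < m) {ω : ℂ} (hω : IsPrimitiveRoot ω m) (j : ℕ) :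
    IsPrimitiveRoot (ω ^ j) (m / Nat.gcd j m) := by
  have hg : Nat.gcd j m ∣ m := Nat.gcd_dvd_right j m
  have hgj : Nat.gcd j m ∣ j := Nat.gcd_dvd_left j m
  have hgpos : 0 < Nat.gcd j m := Nat.gcd_pos_of_pos_right j hm
  have h1 : IsPrimitiveRoot (ω ^ Nat.gcd j m) (m / Nat.gcd j m) :=
    hω.pow hm (Nat.mul_div_cancel' hg).symm
  have h2 : IsPrimitiveRoot ((ω ^ Nat.gcd j m) ^ (j / Nat.gcd j m)) (m / Nat.gcd j m) :=
    h1.pow_of_coprime _ (Nat.coprime_div_gcd_div_gcd hgpos)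
  rwa [← pow_mul, Nat.mul_div_cancel' hgj] at h2

lemma sum_root_pow {m : ℕ} (hm : 0 < m) {ω : ℂ} (hω : IsPrimitiveRoot ω m) (t : ℕ) :
    ∑ j ∈ Finset.range m, ω ^ (j * t) = if t % m = 0 then (m : ℂ) else 0 := by
  simp only [mul_comm _ t, pow_mul]
  by_cases h : t % m = 0
  · rw [if_pos h, (hω.pow_eq_one_iff_dvd t).2 (Nat.dvd_of_mod_eq_zero h)]
    simp
  · rw [if_neg h, geom_sum_eq, ← pow_mul, mul_comm t m, pow_mul, hω.pow_eq_one, one_pow,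
      sub_self, zero_div]
    intro hone
    exact h (Nat.eq_zero_of_dvd_of_lt ((Nat.dvd_mod_iff (dvd_refl m)).2
      ((hω.pow_eq_one_iff_dvd t).1 hone)) (Nat.mod_lt t hm))

lemma card_fiber {m d : ℕ} (hm : 0 < m) (hd : d ∈ m.divisors) :
    ((Finset.range m).filter (fun j => m / Nat.gcd j m = d)).card = Nat.totient d := by
  rw [Nat.mem_divisors] at hd
  obtain ⟨hdvd, -⟩ := hd
  have hdpos : 0 < d := Nat.pos_of_dvd_of_pos hdvd hm
  set e := m / d with he
  have hepos : 0 < e := Nat.div_pos (Nat.le_of_dvd hm hdvd) hdpos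
  have hed : e * d = m := Nat.div_mul_cancel hdvd
  have hcond : ∀ j ∈ Finset.range m, (m / Nat.gcd j m = d ↔ Nat.gcd j m = e) := by
    intro j _
    constructor
    · intro h
      have hg : Nat.gcd j m ∣ m := Nat.gcd_dvd_right j m
      have := Nat.div_div_self hg hm.ne'
      rw [← this, h]
    · intro h
      rw [h, he, Nat.div_div_self hdvd hm.ne']
  rw [Finset.filter_congr hcond, Nat.totient]
  apply Finset.card_bij' (fun j _ => j / e) (fun a _ => e * a)
  · intro j hj
    simp only [Finset.mem_filter, Finset.mem_range] at hj ⊢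
    obtain ⟨hjm, hgcd⟩ := hj
    have hej : e ∣ j := hgcd ▸ Nat.gcd_dvd_left j m
    refine ⟨Nat.div_lt_of_lt_mul (by rwa [hed]), ?_⟩
    have h2 : Nat.gcd (e * (j / e)) (e * d) = e * Nat.gcd (j / e) d := Nat.gcd_mul_left e _ _
    rw [Nat.mul_div_cancel' hej, hed, hgcd] at h2
    have hg1 : Nat.gcd (j / e) d = 1 := (Nat.mul_eq_left hepos.ne').mp h2.symm
    exact Nat.Coprime.symm hg1
  · intro a ha
    simp only [Finset.mem_filter, Finset.mem_range] at ha ⊢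
    obtain ⟨had, hcop⟩ := ha
    constructor
    · rw [← hed]
      exact Nat.mul_lt_mul_of_pos_left had hepos
    · rw [← hed, Nat.gcd_mul_left, Nat.Coprime.gcd_eq_one (Nat.Coprime.symm hcop), mul_one]
  · intro j hj
    simp only [Finset.mem_filter, Finset.mem_range] at hj
    exact Nat.mul_div_cancel' (hj.2 ▸ Nat.gcd_dvd_left j m)
  · intro a _
    exact Nat.mul_div_cancel_left a hepos

lemma numTuples_eq (m n : ℕ) :
    numTuples m n = ((Finset.finsuppAntidiag (Finset.univ : Finset (Fin (m - 1))) n).filter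
      (fun l => (∑ k : Fin (m - 1), ((k : ℕ) + 1) * l k) % m = 0)).card := by
  rw [← Nat.card_eq_finsetCard, numTuples]
  apply Nat.card_congr
  apply Equiv.subtypeEquiv (Finsupp.equivFunOnFinite.symm)
  intro f
  simp [Finset.mem_filter, Finset.mem_finsuppAntidiag]

lemma complex_version (m : ℕ) (hm : 0 < m) :
    (m : ℂ⟦X⟧) * PowerSeries.mk (fun n => (numTuples m n : ℂ)) =
      ∑ d ∈ m.divisors, (Nat.totient d : ℂ⟦X⟧) *
        ((1 - PowerSeries.X) * ((1 - PowerSeries.X ^ d) ^ (m / d))⁻¹) := by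
  obtain ⟨ω, hω⟩ : ∃ ω : ℂ, IsPrimitiveRoot ω m := ⟨_, Complex.isPrimitiveRoot_exp m hm.ne'⟩
  set T : ℕ → ℂ⟦X⟧ := fun d =>
    (1 - PowerSeries.X) * ((1 - PowerSeries.X ^ d) ^ (m / d))⁻¹ with hT
  set Q : ℕ → ℂ⟦X⟧ := fun j =>
    ∏ k : Fin (m - 1), PowerSeries.mk (fun n => ω ^ (j * (((k : ℕ) + 1) * n))) with hQdef
  have hQ : ∀ j, Q j = T (m / Nat.gcd j m) := by
    intro j
    have hg := Nat.gcd_dvd_right j m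
    have hd : 0 < m / Nat.gcd j m :=
      Nat.div_pos (Nat.le_of_dvd hm hg) (Nat.gcd_pos_of_pos_right j hm)
    have h := term_eq hm hd (pow_primitive hm hω j) (Nat.div_dvd_of_dvd hg)
    show Q j = (1 - PowerSeries.X) *
      ((1 - PowerSeries.X ^ (m / Nat.gcd j m)) ^ (m / (m / Nat.gcd j m)))⁻¹
    rw [h, hQdef]
    apply Finset.prod_congr rfl
    intro k _
    exact congrArg PowerSeries.mk (funext fun n => pow_mul ω j _)
  -- Step A : sum over j of Q j equals the RHS
  have stepA : ∑ j ∈ Finset.range m, Q j =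
      ∑ d ∈ m.divisors, (Nat.totient d : ℂ⟦X⟧) * T d := by
    have hmap : ∀ j ∈ Finset.range m, m / Nat.gcd j m ∈ m.divisors := by
      intro j _
      exact Nat.mem_divisors.2 ⟨Nat.div_dvd_of_dvd (Nat.gcd_dvd_right j m), hm.ne'⟩
    rw [← Finset.sum_fiberwise_of_maps_to hmap Q]
    apply Finset.sum_congr rfl
    intro d hd
    have hcong : ∀ j ∈ (Finset.range m).filter (fun j => m / Nat.gcd j m = d), Q j = T d := by
      intro j hj
      rw [Finset.mem_filter] at hj
      rw [hQ j, hj.2]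
    rw [Finset.sum_congr rfl hcong, Finset.sum_const, card_fiber hm hd, nsmul_eq_mul]
  -- Step B : coefficientwise identity
  have stepB : (m : ℂ⟦X⟧) * PowerSeries.mk (fun n => (numTuples m n : ℂ)) =
      ∑ j ∈ Finset.range m, Q j := by
    ext n
    rw [map_sum]
    have hcoeff : ∀ j, PowerSeries.coeff (R := ℂ) n (Q j) =
        ∑ l ∈ Finset.finsuppAntidiag (Finset.univ : Finset (Fin (m - 1))) n,
          ω ^ (j * ∑ k : Fin (m - 1), ((k : ℕ) + 1) * l k) := by
      intro j
      rw [hQdef]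
      simp only
      rw [PowerSeries.coeff_prod]
      apply Finset.sum_congr rfl
      intro l _
      have : ∀ k : Fin (m - 1), k ∈ Finset.univ →
          PowerSeries.coeff (R := ℂ) (l k) (PowerSeries.mk fun n => ω ^ (j * (((k : ℕ) + 1) * n)))
            = ω ^ (j * (((k : ℕ) + 1) * l k)) := by
        intro k _
        rw [PowerSeries.coeff_mk]
      rw [Finset.prod_congr rfl this, Finset.prod_pow_eq_pow_sum, Finset.mul_sum]
    rw [Finset.sum_congr rfl (fun j _ => hcoeff j), Finset.sum_comm]
    have hin : ∀ l ∈ Finset.finsuppAntidiag (Finset.univ : Finset (Fin (m - 1))) n,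
        ∑ j ∈ Finset.range m, ω ^ (j * ∑ k : Fin (m - 1), ((k : ℕ) + 1) * l k)
          = if (∑ k : Fin (m - 1), ((k : ℕ) + 1) * l k) % m = 0 then (m : ℂ) else 0 :=
      fun l _ => sum_root_pow hm hω _
    rw [Finset.sum_congr rfl hin, ← Finset.sum_filter, Finset.sum_const]
    rw [← nsmul_eq_mul, map_nsmul, PowerSeries.coeff_mk, ← numTuples_eq m n]
    simp [nsmul_eq_mul, mul_comm]
  rw [stepB, stepA]

lemma const_ne_q {d r : ℕ} (hd : 0 < d) :
    PowerSeries.constantCoeff (R := ℚ) ((1 - PowerSeries.X ^ d) ^ r) ≠ 0 := by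
  rw [map_pow, map_sub, map_one, map_pow, PowerSeries.constantCoeff_X, zero_pow hd.ne', sub_zero,
    one_pow]
  exact one_ne_zero

lemma map_inv_aux {d : ℕ} (r : ℕ) (hd : 0 < d) :
    PowerSeries.map (algebraMap ℚ ℂ) (((1 - PowerSeries.X ^ d) ^ r)⁻¹ : ℚ⟦X⟧) =
      (((1 - PowerSeries.X ^ d) ^ r : ℂ⟦X⟧))⁻¹ := by
  have hmap : PowerSeries.map (algebraMap ℚ ℂ) ((1 - PowerSeries.X ^ d) ^ r : ℚ⟦X⟧)
      = ((1 - PowerSeries.X ^ d) ^ r : ℂ⟦X⟧) := by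
    rw [map_pow, map_sub, map_one, map_pow, PowerSeries.map_X]
  rw [PowerSeries.eq_inv_iff_mul_eq_one (const_ne hd), ← hmap, ← map_mul,
    PowerSeries.inv_mul_cancel _ (const_ne_q hd), map_one]

theorem stmt3 (m : ℕ) (hm : 0 < m) :
    (m : PowerSeries ℚ) * PowerSeries.mk (fun n => (numTuples m n : ℚ)) =
      ∑ d ∈ m.divisors, (Nat.totient d : PowerSeries ℚ) *
        ((1 - PowerSeries.X) * ((1 - PowerSeries.X ^ d) ^ (m / d))⁻¹) := by
  have hinj : Function.Injective (PowerSeries.map (algebraMap ℚ ℂ)) := by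
    intro p q h
    ext n
    have := congrArg (PowerSeries.coeff (R := ℂ) n) h
    rw [PowerSeries.coeff_map, PowerSeries.coeff_map] at this
    exact (algebraMap ℚ ℂ).injective this
  apply hinj
  rw [map_mul, map_natCast, map_sum]
  have hmk : PowerSeries.map (algebraMap ℚ ℂ) (PowerSeries.mk fun n => (numTuples m n : ℚ))
      = PowerSeries.mk fun n => (numTuples m n : ℂ) := by
    ext n
    simp [PowerSeries.coeff_map]
  rw [hmk, complex_version m hm]
  apply Finset.sum_congr rfl
  intro d hd
  have hdpos : 0 < d := Nat.pos_of_mem_divisors hd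
  rw [map_mul, map_natCast, map_mul, map_sub, map_one, PowerSeries.map_X, map_inv_aux _ hdpos]
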